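/- Let P = (M × M, +, ∗) be a (q,r)-biprojective pre-semifield and let C_P be the centralizer of Z_R^{(q,r)} in Aut(∗). Assume Z^{(q,r)} is a subgroup of C_P of index I with p′ ∤ I. Then Z_R^{(q,r)} is a Sylow p′-subgroup of Aut(∗). -/

import Mathlib

/-- The general `(q,r)`-biprojective pre-semifield multiplication on `M × M`
(the polarization of a `(q,r)`-biprojective map):
`(x,y) ∗ (u,v) = (a₀(x^q u + x u^q) + b₀(x^q v + u^q y) + c₀(x v^q + u y^q) + d₀(y^q v + y v^q),
                  a₁(x^r u + x u^r) + b₁(x^r v + u^r y) + c₁(x v^r + u y^r) + d₁(y^r v + y v^r))`. -/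
def bstar (K : Type) [Field K] (q r : ℕ) (a₀ b₀ c₀ d₀ a₁ b₁ c₁ d₁ : K)
    (z w : K × K) : K × K :=
  (a₀ * (z.1 ^ q * w.1 + z.1 * w.1 ^ q) + b₀ * (z.1 ^ q * w.2 + w.1 ^ q * z.2)
      + c₀ * (z.1 * w.2 ^ q + w.1 * z.2 ^ q) + d₀ * (z.2 ^ q * w.2 + z.2 * w.2 ^ q),
   a₁ * (z.1 ^ r * w.1 + z.1 * w.1 ^ r) + b₁ * (z.1 ^ r * w.2 + w.1 ^ r * z.2)
      + c₁ * (z.1 * w.2 ^ r + w.1 * z.2 ^ r) + d₁ * (z.2 ^ r * w.2 + z.2 * w.2 ^ r))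

/-- The autotopism `γ_u = (N_u, L_u, L_u)` with `N_u(x,y) = (u^{q+1}x, u^{r+1}y)`
and `L_u(x,y) = (ux, uy)`, as a triple of additive automorphisms of `M × M`. -/
noncomputable def gammaTriple (K : Type) [Field K] (q r : ℕ) (u : Kˣ) :
    AddAut (K × K) × AddAut (K × K) × AddAut (K × K) :=
  (AddEquiv.prodCongr (AddAut.mulLeft (u ^ (q + 1))) (AddAut.mulLeft (u ^ (r + 1))),
   AddEquiv.prodCongr (AddAut.mulLeft u) (AddAut.mulLeft u),
   AddEquiv.prodCongr (AddAut.mulLeft u) (AddAut.mulLeft u))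

/-- The multiplicative group structure on `AddAut A` (composition), as in the older Mathlib,
where `AddAut A` was a multiplicative group; it is now an additive group. -/
instance addAutGroupOld (A : Type) [Add A] : Group (AddAut A) where
  mul g h := AddEquiv.trans h g
  one := AddEquiv.refl _
  inv := AddEquiv.symm
  mul_assoc _ _ _ := rfl
  one_mul _ := rfl
  mul_one _ := rfl
  inv_mul_cancel := AddEquiv.self_trans_symm

/-- The autotopism set `Aut(∗)` of a multiplication `∗` on `M × M`, inside the
group `GL(M × M)³` of triples of additive (= `𝔽_p`-linear) bijections. -/
def autSet (K : Type) [Field K] (s : K × K → K × K → K × K) :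
    Set (AddAut (K × K) × AddAut (K × K) × AddAut (K × K)) :=
  {γ | ∀ z w : K × K, γ.1 (s z w) = s (γ.2.1 z) (γ.2.2 w)}

/-- If `∗` is a `(q,r)`-biprojective pre-semifield multiplication and the
centralizer `C_P` of `Z_R^{(q,r)}` in `Aut(∗)` contains `Z^{(q,r)}` with index
prime to `p'`, then `Z_R^{(q,r)}` is a Sylow `p'`-subgroup of `Aut(∗)`:
it is a subgroup contained in `Aut(∗)` whose order is the full `p'`-part
of `|Aut(∗)|`. -/

lemma auxCharP (p m : ℕ) (hp : p.Prime) (hm : 0 < m) (K : Type) [Field K] [Fintype K]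
    (hcard : Fintype.card K = p ^ m) : CharP K p := by
  obtain ⟨p₀, hc₀⟩ := CharP.exists K
  haveI := hc₀
  obtain ⟨n, hp₀, hcard₀⟩ := FiniteField.card K p₀
  have hdvd : p₀ ∣ p := by
    have : p₀ ∣ p ^ m := by
      rw [← hcard, hcard₀]
      exact dvd_pow_self p₀ n.pos.ne'
    exact hp₀.dvd_of_dvd_pow this
  rwa [(Nat.prime_dvd_prime_iff_eq hp₀ hp).mp hdvd] at hc₀

lemma auxSubringCard (p m : ℕ) (hp : p.Prime) (hm : 0 < m) (K : Type) [Field K] [Fintype K]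
    (hcard : Fintype.card K = p ^ m) (F : Subring K) :
    ∃ d : ℕ, 1 ≤ d ∧ d ≤ m ∧ Nat.card F = p ^ d := by
  haveI : CharP K p := auxCharP p m hp hm K hcard
  haveI : CharP F p := CharP.subring K p F
  haveI : Fintype F := Fintype.ofFinite F
  have hfield : IsField F := Finite.isField_of_domain F
  letI : Field F := hfield.toField
  obtain ⟨d, hpd, hcardF⟩ := FiniteField.card F p
  rw [← Nat.card_eq_fintype_card] at hcardF
  refine ⟨d, d.pos, ?_, hcardF⟩
  have hle : Fintype.card F ≤ Fintype.card K :=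
    Fintype.card_le_of_injective _ Subtype.coe_injective
  rw [← Nat.card_eq_fintype_card, hcardF, ← Nat.card_eq_fintype_card (α := K), Nat.card_eq_fintype_card (α := K), hcard] at hle
  exact (Nat.pow_le_pow_iff_right hp.one_lt).mp hle

lemma auxSubringTop (K : Type) [Field K] [Fintype K] (F : Subring K)
    (h : Nat.card F = Fintype.card K) : F = ⊤ := by
  haveI : Fintype F := Fintype.ofFinite F
  rw [Nat.card_eq_fintype_card] at h
  have hsurj : Function.Surjective ((↑) : F → K) :=
    ((Fintype.bijective_iff_injective_and_card _).mpr ⟨Subtype.coe_injective, h⟩).2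
  rw [Subring.eq_top_iff']
  intro x
  obtain ⟨y, rfl⟩ := hsurj x
  exact y.2

lemma auxClosure (p m p' j : ℕ) (hp : p.Prime) (hm : 0 < m)
    (hprim : ∀ i : ℕ, 1 ≤ i → i ≤ m - 1 → ¬ p' ∣ p ^ i - 1)
    (K : Type) [Field K] [Fintype K] (hcard : Fintype.card K = p ^ m)
    (u : Kˣ) (hj : 1 ≤ j) (hord : orderOf u = p' ^ j) :
    Subring.closure {(u : K)} = ⊤ := by
  set F := Subring.closure {(u : K)} with hF
  obtain ⟨d, hd1, hdm, hcF⟩ := auxSubringCard p m hp hm K hcard F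
  have hmem : (u : K) ∈ F := Subring.subset_closure rfl
  haveI : Fintype F := Fintype.ofFinite F
  haveI : CharP K p := auxCharP p m hp hm K hcard
  letI : Field F := (Finite.isField_of_domain F).toField
  set b : F := (⟨(u : K), hmem⟩ : F) with hb
  have hb0 : b ≠ 0 := by
    intro h
    exact u.ne_zero (by simpa [hb, Subtype.ext_iff] using h)
  have hpow : b ^ (Fintype.card F - 1) = 1 := FiniteField.pow_card_sub_one_eq_one b hb0
  have hordb : orderOf b = p' ^ j := by
    have h1 : orderOf (b : K) = orderOf b :=
      orderOf_injective (F.subtype : F →+* K).toMonoidHom Subtype.coe_injective b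
    have h2 : orderOf ((u : K) : K) = orderOf u := orderOf_units
    rw [← hord, ← h2, ← h1]
  have hdvd1 : p' ^ j ∣ p ^ d - 1 := by
    have := orderOf_dvd_of_pow_eq_one hpow
    rwa [hordb, ← Nat.card_eq_fintype_card, hcF] at this
  have hdvd2 : p' ∣ p ^ d - 1 := dvd_trans (dvd_pow_self p' (Nat.one_le_iff_ne_zero.mp hj)) hdvd1
  have hdm' : d = m := by
    by_contra hne
    exact hprim d hd1 (by omega) hdvd2
  subst hdm'
  exact auxSubringTop K F (by rw [hcF, hcard])

lemma auxSigma (p m p' : ℕ) (hp : p.Prime) (hm : 0 < m) (hp' : p'.Prime)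
    (hprim : ∀ i : ℕ, 1 ≤ i → i ≤ m - 1 → ¬ p' ∣ p ^ i - 1)
    (hp'p : ¬ p' ∣ p)
    (K : Type) [Field K] [Fintype K] (hcard : Fintype.card K = p ^ m)
    (σ : K ≃+* K) (ee : ℕ) (hσ : σ ^ (p' ^ ee) = 1) : σ = 1 := by
  by_contra hne
  haveI : Fact p'.Prime := ⟨hp'⟩
  set Γ := Subgroup.zpowers (σ : RingAut K) with hΓdef
  have hΓ : IsPGroup p' Γ := by
    intro g
    refine ⟨ee, ?_⟩
    obtain ⟨zz, hzz⟩ := g.2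
    apply Subtype.ext
    push_cast
    rw [← hzz, ← zpow_natCast, ← zpow_mul, mul_comm, zpow_mul, zpow_natCast, hσ, one_zpow]
  have key := hΓ.card_modEq_card_fixedPoints K
  set F : Subring K := RingHom.eqLocus (σ : K →+* K) (RingHom.id K) with hFdef
  have hfix : MulAction.fixedPoints Γ K = (F : Set K) := by
    ext x
    constructor
    · intro hx
      have := hx ⟨σ, Subgroup.mem_zpowers σ⟩
      rw [Subgroup.smul_def, RingAut.smul_def] at this
      exact this
    · intro hx
      intro γ
      have hstab : (σ : RingAut K) ∈ MulAction.stabilizer (RingAut K) x := by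
        rw [MulAction.mem_stabilizer_iff, RingAut.smul_def]
        exact hx
      have hγ : (γ : RingAut K) ∈ MulAction.stabilizer (RingAut K) x :=
        (Subgroup.zpowers_le.mpr hstab) γ.2
      rw [Subgroup.smul_def]
      exact hγ
  obtain ⟨d, hd1, hdm, hcF⟩ := auxSubringCard p m hp hm K hcard F
  have hFne : F ≠ ⊤ := by
    intro h
    apply hne
    ext x
    have : x ∈ F := h ▸ Subring.mem_top x
    exact this
  have hdlt : d < m := by
    rcases lt_or_eq_of_le hdm with h | h
    · exact h
    · exact absurd (auxSubringTop K F (by rw [hcF, h, hcard])) hFne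
  have hcfix : Nat.card (MulAction.fixedPoints Γ K) = p ^ d := by
    rw [hfix]
    simpa using hcF
  have hcK : Nat.card K = p ^ m := by rw [Nat.card_eq_fintype_card, hcard]
  rw [hcK, hcfix] at key
  have hdvd : p' ∣ p ^ m - p ^ d :=
    (Nat.modEq_iff_dvd' (Nat.pow_le_pow_right hp.pos (le_of_lt hdlt))).mp key.symm
  have heq : p ^ m - p ^ d = p ^ d * (p ^ (m - d) - 1) := by
    rw [Nat.mul_sub, mul_one, ← pow_add]
    congr 2
    omega
  rw [heq] at hdvd
  have hdvd2 : p' ∣ p ^ (m - d) - 1 := by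
    rcases (Nat.Prime.dvd_mul hp').mp hdvd with h | h
    · exact absurd (hp'.dvd_of_dvd_pow h) hp'p
    · exact h
  exact hprim (m - d) (by omega) (by omega) hdvd2

lemma addAutOld_mul_apply {A : Type} [Add A] (f g : AddAut A) (x : A) :
    (f * g) x = f (g x) := rfl

lemma addAutOld_one_apply {A : Type} [Add A] (x : A) :
    (1 : AddAut A) x = x := rfl

lemma auxKey (p m p' : ℕ) (hp : p.Prime) (hm : 0 < m) (hp' : p'.Prime)
    (hprim : ∀ i : ℕ, 1 ≤ i → i ≤ m - 1 → ¬ p' ∣ p ^ i - 1) (hp'p : ¬ p' ∣ p)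
    (K : Type) [Field K] [Fintype K] (hcard : Fintype.card K = p ^ m)
    (g₂ : AddAut (K × K)) (ee : ℕ) (hg : g₂ ^ (p' ^ ee) = 1)
    (u v : Kˣ) (j : ℕ) (hj : 1 ≤ j) (hord : orderOf u = p' ^ j)
    (hcomm : ∀ z : K × K,
      g₂ ((u : K) * z.1, (u : K) * z.2) = ((v : K) * (g₂ z).1, (v : K) * (g₂ z).2)) :
    v = u := by
  classical
  let spec : K → K → Prop := fun c c' =>
    ∀ z : K × K, g₂ (c * z.1, c * z.2) = (c' * (g₂ z).1, c' * (g₂ z).2)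
  have specMul : ∀ a a' b b', spec a a' → spec b b' → spec (a * b) (a' * b') := by
    intro a a' b b' ha hb z
    have h1 := ha (b * z.1, b * z.2)
    simp only [Prod.fst, Prod.snd] at h1
    calc g₂ (a * b * z.1, a * b * z.2) = g₂ (a * (b * z.1), a * (b * z.2)) := by ring_nf
      _ = (a' * (g₂ (b * z.1, b * z.2)).1, a' * (g₂ (b * z.1, b * z.2)).2) := h1
      _ = (a' * (b' * (g₂ z).1), a' * (b' * (g₂ z).2)) := by rw [hb z]
      _ = (a' * b' * (g₂ z).1, a' * b' * (g₂ z).2) := by ring_nf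
  have specOne : spec 1 1 := by intro z; simp
  have specZero : spec 0 0 := by
    intro z
    simp only [zero_mul]
    exact (map_zero g₂ : g₂ (0 : K × K) = 0) ▸ rfl
  have specAdd : ∀ a a' b b', spec a a' → spec b b' → spec (a + b) (a' + b') := by
    intro a a' b b' ha hb z
    have : ((a + b) * z.1, (a + b) * z.2)
        = ((a * z.1, a * z.2) : K × K) + (b * z.1, b * z.2) := by
      simp [Prod.ext_iff]; constructor <;> ring
    rw [this, map_add, ha z, hb z]
    simp [Prod.ext_iff]; constructor <;> ring
  have specNeg : ∀ a a', spec a a' → spec (-a) (-a') := by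
    intro a a' ha z
    have : ((-a) * z.1, (-a) * z.2) = -((a * z.1, a * z.2) : K × K) := by
      simp [Prod.ext_iff]
    rw [this, map_neg, ha z]
    simp [Prod.ext_iff]
  have huniq : ∀ c c1 c2, spec c c1 → spec c c2 → c1 = c2 := by
    intro c c1 c2 h1 h2
    have h := (h1 (g₂.symm (1, 1))).symm.trans (h2 (g₂.symm (1, 1)))
    have hw : g₂ (g₂.symm ((1 : K), (1 : K))) = (1, 1) := g₂.apply_symm_apply _
    rw [hw] at h
    simpa using congrArg Prod.fst h
  let Sc : Subring K :=
    { carrier := {c | ∃ c', spec c c'}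
      mul_mem' := fun ⟨a', ha⟩ ⟨b', hb⟩ => ⟨_, specMul _ _ _ _ ha hb⟩
      one_mem' := ⟨1, specOne⟩
      add_mem' := fun ⟨a', ha⟩ ⟨b', hb⟩ => ⟨_, specAdd _ _ _ _ ha hb⟩
      zero_mem' := ⟨0, specZero⟩
      neg_mem' := fun ⟨a', ha⟩ => ⟨_, specNeg _ _ ha⟩ }
  have htop : ∀ c : K, ∃ c', spec c c' := by
    intro c
    have hle : Subring.closure {(u : K)} ≤ Sc :=
      Subring.closure_le.mpr (Set.singleton_subset_iff.mpr ⟨(v : K), hcomm⟩)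
    have := auxClosure p m p' j hp hm hprim K hcard u hj hord
    rw [this] at hle
    exact hle (Subring.mem_top c)
  let σf : K → K := fun c => Classical.choose (htop c)
  have hσf : ∀ c, spec c (σf c) := fun c => Classical.choose_spec (htop c)
  let σ : K →+* K :=
    { toFun := σf
      map_one' := huniq _ _ _ (hσf 1) specOne
      map_mul' := fun c d => huniq _ _ _ (hσf (c * d)) (specMul _ _ _ _ (hσf c) (hσf d))
      map_zero' := huniq _ _ _ (hσf 0) specZero
      map_add' := fun c d => huniq _ _ _ (hσf (c + d)) (specAdd _ _ _ _ (hσf c) (hσf d)) }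
  have hσbij : Function.Bijective σ :=
    (Finite.injective_iff_bijective).mp σ.injective
  let σe : K ≃+* K := RingEquiv.ofBijective σ hσbij
  have hσe : ∀ c, σe c = σf c := fun c => rfl
  have hiter : ∀ (n : ℕ) (c : K) (z : K × K),
      (g₂ ^ n) (c * z.1, c * z.2)
        = (σf^[n] c * ((g₂ ^ n) z).1, σf^[n] c * ((g₂ ^ n) z).2) := by
    intro n
    induction n with
    | zero => intro c z; simp [addAutOld_one_apply]
    | succ n ih =>
      intro c z
      rw [pow_succ, addAutOld_mul_apply, addAutOld_mul_apply, hσf c z, ih (σf c) (g₂ z),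
        Function.iterate_succ_apply]
  have hNfix : ∀ c : K, σf^[p' ^ ee] c = c := by
    intro c
    have h := hiter (p' ^ ee) c (1, 1)
    rw [hg] at h
    simp only [addAutOld_one_apply] at h
    have := congrArg Prod.fst h
    simpa using this.symm
  have hσepow : ∀ (n : ℕ) (x : K), (σe ^ n) x = σf^[n] x := by
    intro n
    induction n with
    | zero => intro x; simp [pow_zero]
    | succ n ih =>
      intro x
      rw [pow_succ, Function.iterate_succ_apply]
      show (σe ^ n) (σe x) = _
      rw [ih (σe x), hσe]
  have hσeN : σe ^ (p' ^ ee) = 1 := by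
    apply RingEquiv.ext
    intro x
    rw [hσepow]
    simpa using hNfix x
  have hσe1 : σe = 1 := auxSigma p m p' hp hm hp' hprim hp'p K hcard σe ee hσeN
  have hvu : (v : K) = (u : K) := by
    have h1 : σf (u : K) = (v : K) := huniq _ _ _ (hσf (u : K)) hcomm
    have h2 : σf (u : K) = (u : K) := by
      have := congrArg (fun (τ : K ≃+* K) => τ (u : K)) hσe1
      simpa [hσe] using this
    rw [← h1, h2]
  exact Units.ext hvu

lemma prodCongrAddAut_apply {K : Type} [Field K] (f g : AddAut K) (z : K × K) :
    (AddEquiv.prodCongr f g) z = (f z.1, g z.2) := rfl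

lemma mulLeft_apply' {K : Type} [Field K] (u : Kˣ) (x : K) :
    (AddAut.mulLeft u) x = (u : K) * x := rfl

lemma prodCongr_mulLeft_apply' {K : Type} [Field K] (u v : Kˣ) (z : K × K) :
    (AddEquiv.prodCongr (AddAut.mulLeft u) (AddAut.mulLeft v)) z = ((u : K) * z.1, (v : K) * z.2) :=
  rfl

lemma gammaTriple_mul (K : Type) [Field K] (q r : ℕ) (u v : Kˣ) :
    gammaTriple K q r (u * v) = gammaTriple K q r u * gammaTriple K q r v := by
  unfold gammaTriple
  refine Prod.ext ?_ (Prod.ext ?_ ?_) <;>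
  · apply AddEquiv.ext
    intro z
    simp only [Prod.fst_mul, Prod.snd_mul]
    rw [addAutOld_mul_apply]
    simp only [prodCongr_mulLeft_apply']
    rw [Prod.ext_iff]
    constructor <;> · push_cast [mul_pow]; ring

/-- `gammaTriple` as a monoid hom. -/
noncomputable def gammaHom (K : Type) [Field K] (q r : ℕ) :
    Kˣ →* AddAut (K × K) × AddAut (K × K) × AddAut (K × K) :=
  MonoidHom.mk' (gammaTriple K q r) (gammaTriple_mul K q r)

lemma gammaHom_injective (K : Type) [Field K] (q r : ℕ) :
    Function.Injective (gammaHom K q r) := by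
  intro u v h
  have h2 := congrArg (fun t => t.2.1 ((1 : K), (0 : K))) h
  simp only [gammaHom, MonoidHom.mk'_apply, gammaTriple] at h2
  apply Units.ext
  simpa [prodCongr_mulLeft_apply', prodCongrAddAut_apply, mulLeft_apply', Units.smul_def, smul_eq_mul] using congrArg Prod.fst h2

lemma gammaTriple_snd_fst_apply (K : Type) [Field K] (q r : ℕ) (u : Kˣ) (z : K × K) :
    (gammaTriple K q r u).2.1 z = ((u : K) * z.1, (u : K) * z.2) := by
  simp [gammaTriple, prodCongr_mulLeft_apply', prodCongrAddAut_apply, mulLeft_apply', Units.smul_def, smul_eq_mul]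

/-- The autotopism set is a subgroup. -/
def autSubgroup (K : Type) [Field K] (s : K × K → K × K → K × K) :
    Subgroup (AddAut (K × K) × AddAut (K × K) × AddAut (K × K)) where
  carrier := autSet K s
  one_mem' := by intro z w; simp [autSet, addAutOld_one_apply]
  mul_mem' := by
    intro a b ha hb z w
    simp only [Prod.fst_mul, Prod.snd_mul, addAutOld_mul_apply]
    rw [hb z w, ha (b.2.1 z) (b.2.2 w)]
  inv_mem' := by
    intro a ha z w
    have h := ha ((a⁻¹).2.1 z) ((a⁻¹).2.2 w)
    simp only [Prod.fst_inv, Prod.snd_inv] at h ⊢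
    have h1 : a.2.1 ((a.2.1)⁻¹ z) = z := by
      rw [← addAutOld_mul_apply, mul_inv_cancel, addAutOld_one_apply]
    have h2 : a.2.2 ((a.2.2)⁻¹ w) = w := by
      rw [← addAutOld_mul_apply, mul_inv_cancel, addAutOld_one_apply]
    rw [h1, h2] at h
    rw [← h, ← addAutOld_mul_apply, inv_mul_cancel, addAutOld_one_apply]

set_option maxHeartbeats 1000000 in
set_option synthInstance.maxHeartbeats 200000 in
theorem stmt_10 (p m p' k l : ℕ) (hp : Nat.Prime p) (hp2 : p ≠ 2) (hm : 2 < m)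
    (K : Type) [Field K] [Fintype K] (hcard : Fintype.card K = p ^ m)
    (hk : k < m) (hl : l < m)
    (hp' : Nat.Prime p') (hdvd : p' ∣ p ^ m - 1)
    (hprim : ∀ i : ℕ, 1 ≤ i → i ≤ m - 1 → ¬ p' ∣ p ^ i - 1)
    (a₀ b₀ c₀ d₀ a₁ b₁ c₁ d₁ : K)
    (hsf : ∀ z w : K × K,
      bstar K (p ^ k) (p ^ l) a₀ b₀ c₀ d₀ a₁ b₁ c₁ d₁ z w = 0 → z = 0 ∨ w = 0)
    -- Condition (C): `Z^{(q,r)} ≤ C_P` with index `I` not divisible by `p'`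
    (hZC : {γ | ∃ u : Kˣ, γ = gammaTriple K (p ^ k) (p ^ l) u} ⊆
        {γ ∈ autSet K (bstar K (p ^ k) (p ^ l) a₀ b₀ c₀ d₀ a₁ b₁ c₁ d₁) |
          ∀ δ, (∃ u : Kˣ, (∃ j : ℕ, orderOf u = p' ^ j) ∧
                δ = gammaTriple K (p ^ k) (p ^ l) u) → γ * δ = δ * γ})
    (hI : ∃ I : ℕ, ¬ p' ∣ I ∧
      Nat.card {γ ∈ autSet K (bstar K (p ^ k) (p ^ l) a₀ b₀ c₀ d₀ a₁ b₁ c₁ d₁) |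
          ∀ δ, (∃ u : Kˣ, (∃ j : ℕ, orderOf u = p' ^ j) ∧
                δ = gammaTriple K (p ^ k) (p ^ l) u) → γ * δ = δ * γ}
        = I * Nat.card {γ | ∃ u : Kˣ, γ = gammaTriple K (p ^ k) (p ^ l) u}) :
    {γ | ∃ u : Kˣ, (∃ j : ℕ, orderOf u = p' ^ j) ∧ γ = gammaTriple K (p ^ k) (p ^ l) u} ⊆
        autSet K (bstar K (p ^ k) (p ^ l) a₀ b₀ c₀ d₀ a₁ b₁ c₁ d₁)
      ∧ (∃ H : Subgroup (AddAut (K × K) × AddAut (K × K) × AddAut (K × K)),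
          (H : Set (AddAut (K × K) × AddAut (K × K) × AddAut (K × K)))
            = {γ | ∃ u : Kˣ, (∃ j : ℕ, orderOf u = p' ^ j) ∧
                γ = gammaTriple K (p ^ k) (p ^ l) u})
      ∧ Nat.card {γ | ∃ u : Kˣ, (∃ j : ℕ, orderOf u = p' ^ j) ∧
            γ = gammaTriple K (p ^ k) (p ^ l) u}
          = p' ^ ((Nat.card
              (autSet K (bstar K (p ^ k) (p ^ l) a₀ b₀ c₀ d₀ a₁ b₁ c₁ d₁))).factorization p') := by
  classical
  haveI factp' : Fact p'.Prime := ⟨hp'⟩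
  have hm0 : 0 < m := by omega
  haveI : Finite (AddAut (K × K)) :=
    Finite.of_injective (fun f => (f : K × K → K × K)) DFunLike.coe_injective
  set s : K × K → K × K → K × K := bstar K (p ^ k) (p ^ l) a₀ b₀ c₀ d₀ a₁ b₁ c₁ d₁ with hs
  set φ : Kˣ →* AddAut (K × K) × AddAut (K × K) × AddAut (K × K) :=
    gammaHom K (p ^ k) (p ^ l) with hφdef
  have hφinj : Function.Injective φ := gammaHom_injective K (p ^ k) (p ^ l)
  have hφapp : ∀ u : Kˣ, φ u = gammaTriple K (p ^ k) (p ^ l) u := fun u => rfl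
  have hp'p : ¬ p' ∣ p := by
    intro h
    have hpp' : p' = p := (Nat.prime_dvd_prime_iff_eq hp' hp).mp h
    rw [hpp'] at hdvd
    have h1 : p ∣ p ^ m := dvd_pow_self p hm0.ne'
    have h2 : p ∣ p ^ m - (p ^ m - 1) := Nat.dvd_sub h1 hdvd
    have h3 : 1 < p ^ m := Nat.one_lt_pow hm0.ne' hp.one_lt
    rw [show p ^ m - (p ^ m - 1) = 1 by omega] at h2
    exact hp.one_lt.ne' (Nat.dvd_one.mp h2)
  -- subgroups
  set Asub : Subgroup (AddAut (K × K) × AddAut (K × K) × AddAut (K × K)) :=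
    autSubgroup K s with hAdef
  set P' : Subgroup Kˣ := CommGroup.primaryComponent Kˣ p' with hP'def
  have hP'mem : ∀ u : Kˣ, u ∈ P' ↔ ∃ j, orderOf u = p' ^ j := fun u => CommGroup.mem_primaryComponent_iff_orderOf
  set Zr : Subgroup (AddAut (K × K) × AddAut (K × K) × AddAut (K × K)) := P'.map φ with hZrdef
  have hZrSet : (Zr : Set (AddAut (K × K) × AddAut (K × K) × AddAut (K × K)))
      = {γ | ∃ u : Kˣ, (∃ j : ℕ, orderOf u = p' ^ j) ∧
          γ = gammaTriple K (p ^ k) (p ^ l) u} := by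
    ext x
    constructor
    · rintro ⟨u, hu, rfl⟩
      exact ⟨u, (hP'mem u).mp hu, rfl⟩
    · rintro ⟨u, hu, rfl⟩
      exact ⟨u, (hP'mem u).mpr hu, rfl⟩
  have hZSet : (φ.range : Set (AddAut (K × K) × AddAut (K × K) × AddAut (K × K)))
      = {γ | ∃ u : Kˣ, γ = gammaTriple K (p ^ k) (p ^ l) u} := by
    ext x
    constructor
    · rintro ⟨u, rfl⟩
      exact ⟨u, rfl⟩
    · rintro ⟨u, rfl⟩
      exact ⟨u, rfl⟩
  have hA_of_Z : ∀ u : Kˣ, φ u ∈ Asub := fun u => (hZC ⟨u, rfl⟩).1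
  have hZr_le_A : Zr ≤ Asub := by
    rintro x ⟨u, hu, rfl⟩
    exact hA_of_Z u
  set Csub : Subgroup (AddAut (K × K) × AddAut (K × K) × AddAut (K × K)) :=
    Asub ⊓ Subgroup.centralizer (Zr : Set _) with hCdef
  have hCset : (Csub : Set (AddAut (K × K) × AddAut (K × K) × AddAut (K × K)))
      = {γ ∈ autSet K (bstar K (p ^ k) (p ^ l) a₀ b₀ c₀ d₀ a₁ b₁ c₁ d₁) |
          ∀ δ, (∃ u : Kˣ, (∃ j : ℕ, orderOf u = p' ^ j) ∧
                δ = gammaTriple K (p ^ k) (p ^ l) u) → γ * δ = δ * γ} := by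
    ext γ
    constructor
    · rintro ⟨h1, h2⟩
      refine ⟨h1, fun δ hδ => ?_⟩
      have : δ ∈ (Zr : Set _) := hZrSet ▸ hδ
      exact (Subgroup.mem_centralizer_iff.mp h2 δ this).symm
    · rintro ⟨h1, h2⟩
      refine ⟨h1, Subgroup.mem_centralizer_iff.mpr fun δ hδ => ?_⟩
      have : δ ∈ {γ | ∃ u : Kˣ, (∃ j : ℕ, orderOf u = p' ^ j) ∧
          γ = gammaTriple K (p ^ k) (p ^ l) u} := hZrSet ▸ hδ
      exact (h2 δ this).symm
  have hZ_le_C : φ.range ≤ Csub := by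
    rintro x ⟨u, rfl⟩
    have hZCu := hZC (Set.mem_setOf.mpr ⟨u, rfl⟩)
    refine ⟨hZCu.1, Subgroup.mem_centralizer_iff.mpr fun δ hδ => ?_⟩
    have : δ ∈ {γ | ∃ w : Kˣ, (∃ j : ℕ, orderOf w = p' ^ j) ∧
        γ = gammaTriple K (p ^ k) (p ^ l) w} := hZrSet ▸ hδ
    exact (hZCu.2 δ this).symm
  have hZr_le_C : Zr ≤ Csub := le_trans (Subgroup.map_le_range φ P') hZ_le_C
  -- cardinalities
  have hn1 : 1 < p ^ m := Nat.one_lt_pow hm0.ne' hp.one_lt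
  have hn0 : p ^ m - 1 ≠ 0 := by omega
  have hcardKx : Nat.card Kˣ = p ^ m - 1 := by
    rw [Nat.card_units, Nat.card_eq_fintype_card, hcard]
  set w : ℕ := (p ^ m - 1).factorization p' with hwdef
  have hPgroup : IsPGroup p' P' := CommGroup.primaryComponent.isPGroup
  obtain ⟨i, hi⟩ := IsPGroup.iff_card.mp hPgroup
  obtain ⟨gen, hgen⟩ := IsCyclic.exists_generator (α := Kˣ)
  have hordgen : orderOf gen = p ^ m - 1 := by
    rw [orderOf_eq_card_of_forall_mem_zpowers hgen, hcardKx]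
  have hsplit : p' ^ w * ((p ^ m - 1) / p' ^ w) = p ^ m - 1 :=
    Nat.ordProj_mul_ordCompl_eq_self (p ^ m - 1) p'
  set t : ℕ := (p ^ m - 1) / p' ^ w with htdef
  have ht0 : 0 < t := Nat.ordCompl_pos p' hn0
  have hordx : orderOf (gen ^ t) = p' ^ w := by
    rw [orderOf_pow, hordgen, ← hsplit]
    rw [Nat.gcd_eq_right (dvd_mul_left t (p' ^ w)), Nat.mul_div_cancel _ ht0]
  have hxmem : gen ^ t ∈ P' := (hP'mem _).mpr ⟨w, hordx⟩
  have hcardP' : Nat.card P' = p' ^ w := by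
    have h1 : p' ^ w ∣ Nat.card P' := by
      have : orderOf (⟨gen ^ t, hxmem⟩ : P') = p' ^ w := by
        rw [← hordx]
        exact (orderOf_injective P'.subtype Subtype.coe_injective _).symm
      rw [← this]
      exact orderOf_dvd_natCard _
    have h2 : Nat.card P' ∣ p ^ m - 1 := by
      rw [← hcardKx]
      exact Subgroup.card_subgroup_dvd_card P'
    rw [hi] at h1 h2 ⊢
    have hwi : w ≤ i := (Nat.pow_dvd_pow_iff_le_right hp'.one_lt).mp h1
    have hiw : i ≤ w := (Nat.Prime.pow_dvd_iff_le_factorization hp' hn0).mp h2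
    congr 1
    omega
  have hcardZr : Nat.card Zr = p' ^ w := by
    rw [← hcardP']
    exact (Nat.card_congr (P'.equivMapOfInjective φ hφinj).toEquiv).symm
  have hcardZfull : Nat.card φ.range = p ^ m - 1 := by
    rw [← hcardKx]
    exact (Nat.card_congr (MonoidHom.ofInjective hφinj).toEquiv).symm
  obtain ⟨I, hI1, hI2⟩ := hI
  have hcardC : Nat.card Csub = I * (p ^ m - 1) := by
    rw [← hCset, ← hZSet] at hI2
    rw [← hcardZfull]
    exact hI2
  haveI : Nonempty Csub := ⟨⟨1, Csub.one_mem⟩⟩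
  have hCpos : 0 < Nat.card Csub := Nat.card_pos
  have hI0 : I ≠ 0 := by
    intro h
    rw [h, zero_mul] at hcardC
    omega
  have hvC : (Nat.card Csub).factorization p' = w := by
    rw [hcardC, Nat.factorization_mul hI0 hn0]
    simp [Nat.factorization_eq_zero_of_not_dvd hI1]
    rfl
  -- Sylow argument
  set zr : Subgroup Asub := Zr.subgroupOf Asub with hzrdef
  have hzr_equiv : zr ≃* Zr := Subgroup.subgroupOfEquivOfLe hZr_le_A
  have hzr_card : Nat.card zr = Nat.card Zr := Nat.card_congr hzr_equiv.toEquiv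
  have hZrP : IsPGroup p' Zr := hPgroup.map φ
  have hzrP : IsPGroup p' zr := by
    intro g
    obtain ⟨n, hn⟩ := hZrP (hzr_equiv g)
    exact ⟨n, hzr_equiv.injective (by rw [map_pow, hn, map_one])⟩
  obtain ⟨S, hS⟩ := hzrP.exists_le_sylow
  have hmain : zr = (S : Subgroup Asub) := by
    by_contra hne
    have hHne : zr.subgroupOf (S : Subgroup Asub) ≠ ⊤ := by
      intro h
      exact hne (le_antisymm hS (Subgroup.subgroupOf_eq_top.mp h))
    have hSp : IsPGroup p' (S : Subgroup Asub) := S.isPGroup'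
    haveI : Group.IsNilpotent ↥(S : Subgroup Asub) := hSp.isNilpotent
    have hlt := normalizerCondition_of_isNilpotent (G := ↥(S : Subgroup Asub))
      (zr.subgroupOf (S : Subgroup Asub)) (lt_top_iff_ne_top.mpr hHne)
    obtain ⟨g', hg'N, hg'H⟩ := SetLike.exists_of_lt hlt
    set gA : Asub := (g' : Asub) with hgAdef
    set gG : AddAut (K × K) × AddAut (K × K) × AddAut (K × K) := (gA : AddAut (K × K) × AddAut (K × K) × AddAut (K × K)) with hgGdef
    obtain ⟨ee, hee⟩ := hSp g'
    have hgpow : gG ^ (p' ^ ee) = 1 := by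
      calc gG ^ (p' ^ ee)
          = (((g' ^ (p' ^ ee) : (S : Subgroup Asub)) : Asub) :
              AddAut (K × K) × AddAut (K × K) × AddAut (K × K)) := by push_cast; rfl
        _ = 1 := by rw [hee]; rfl
    have hcent : ∀ du ∈ Zr, gG * du * gG⁻¹ = du := by
      rintro du ⟨u, hu, rfl⟩
      have hφuA : φ u ∈ Asub := hA_of_Z u
      have hxzr : (⟨φ u, hφuA⟩ : Asub) ∈ zr :=
        Subgroup.mem_subgroupOf.mpr ⟨u, hu, rfl⟩
      have hxS : (⟨φ u, hφuA⟩ : Asub) ∈ (S : Subgroup Asub) := hS hxzr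
      have h2 := (Subgroup.mem_normalizer_iff.mp hg'N
        (⟨⟨φ u, hφuA⟩, hxS⟩ : (S : Subgroup Asub))).mp
        (Subgroup.mem_subgroupOf.mpr hxzr)
      have h3 : gG * (φ u) * gG⁻¹ ∈ Zr := by
        have := Subgroup.mem_subgroupOf.mp (Subgroup.mem_subgroupOf.mp h2)
        convert this using 2
        rfl
      obtain ⟨v, hv, hveq⟩ := h3
      obtain ⟨j, hj⟩ := (hP'mem u).mp hu
      by_cases hj0 : j = 0
      · have hu1 : u = 1 := orderOf_eq_one_iff.mp (by rw [hj, hj0, pow_zero])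
        subst hu1
        simp
      · have hmid : ∀ z : K × K,
            gG.2.1 ((u : K) * z.1, (u : K) * z.2)
              = ((v : K) * (gG.2.1 z).1, (v : K) * (gG.2.1 z).2) := by
          intro z
          have h6 : gG * φ u = φ v * gG := by
            rw [hveq]
            group
          have h4 := congrArg (fun t => t.2.1 z) h6
          simp only [Prod.fst_mul, Prod.snd_mul, addAutOld_mul_apply] at h4
          rw [hφapp u, hφapp v, gammaTriple_snd_fst_apply,
            gammaTriple_snd_fst_apply] at h4
          exact h4
        have hg2pow : gG.2.1 ^ (p' ^ ee) = 1 := by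
          have := congrArg (fun t => t.2.1) hgpow
          simpa [Prod.pow_fst, Prod.pow_snd] using this
        have hvu : v = u := auxKey p m p' hp hm0 hp' hprim hp'p K hcard
          (gG.2.1) ee hg2pow u v j (by omega) hj hmid
        rw [hvu] at hveq
        rw [← hveq]
    let U : Subgroup (AddAut (K × K) × AddAut (K × K) × AddAut (K × K)) :=
      Zr ⊔ Subgroup.zpowers gG
    have hgGC : gG ∈ Csub := by
      refine ⟨gA.2, Subgroup.mem_centralizer_iff.mpr fun h hh => ?_⟩
      have := hcent h hh
      rw [mul_inv_eq_iff_eq_mul] at this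
      rw [this]
    have hU_le_C : U ≤ Csub := sup_le hZr_le_C (Subgroup.zpowers_le.mpr hgGC)
    have hU_le_imS : U ≤ Subgroup.map Asub.subtype (S : Subgroup Asub) := by
      refine sup_le ?_ (Subgroup.zpowers_le.mpr ⟨gA, g'.2, rfl⟩)
      intro x hx
      have hxA : x ∈ Asub := hZr_le_A hx
      exact ⟨⟨x, hxA⟩, hS (Subgroup.mem_subgroupOf.mpr hx), rfl⟩
    have hU_pG : IsPGroup p' U := IsPGroup.to_le (hSp.map Asub.subtype) hU_le_imS
    obtain ⟨ii, hii⟩ := IsPGroup.iff_card.mp hU_pG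
    have hd1 : Nat.card Zr ∣ Nat.card U := Subgroup.card_dvd_of_le le_sup_left
    have hd2 : Nat.card U ∣ Nat.card Csub := Subgroup.card_dvd_of_le hU_le_C
    have hcardU : Nat.card U = p' ^ w := by
      rw [hii] at hd1 hd2 ⊢
      rw [hcardZr] at hd1
      have hwi : w ≤ ii := (Nat.pow_dvd_pow_iff_le_right hp'.one_lt).mp hd1
      have hiw : ii ≤ w := by
        have := (Nat.Prime.pow_dvd_iff_le_factorization hp' hCpos.ne').mp hd2
        omega
      congr 1
      omega
    have hZrU : Zr = U := Subgroup.eq_of_le_of_card_ge le_sup_left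
      (by rw [hcardU, hcardZr])
    have hgGZr : gG ∈ Zr := by
      rw [hZrU]
      exact Subgroup.mem_sup_right (Subgroup.mem_zpowers gG)
    apply hg'H
    have hgAzr : gA ∈ zr := Subgroup.mem_subgroupOf.mpr hgGZr
    exact Subgroup.mem_subgroupOf.mpr hgAzr
  -- conclusion
  haveI : Nonempty Asub := ⟨⟨1, Asub.one_mem⟩⟩
  refine ⟨?_, ⟨Zr, hZrSet⟩, ?_⟩
  · intro γ hγ
    obtain ⟨u, _, rfl⟩ := hγ
    exact (hZC ⟨u, rfl⟩).1
  · have e1 : Nat.card ({γ | ∃ u : Kˣ, (∃ j : ℕ, orderOf u = p' ^ j) ∧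
        γ = gammaTriple K (p ^ k) (p ^ l) u} :
          Set (AddAut (K × K) × AddAut (K × K) × AddAut (K × K))) = Nat.card Zr := by
      rw [← hZrSet]
      rfl
    have e2 : Nat.card Zr = Nat.card (S : Subgroup Asub) := by
      rw [← hzr_card, hmain]
    have e3 : Nat.card (S : Subgroup Asub) = p' ^ ((Nat.card Asub).factorization p') :=
      S.card_eq_multiplicity
    have e4 : Nat.card Asub = Nat.card (autSet K s) := rfl
    rw [e1, e2, e3, e4]
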